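/- arXiv:2604.16781 — 2 statements merged into one kernel-verified Lean document; each statement's English description precedes it below -/
import Mathlib

section
/- For the pulsone y[n] = (1/√N) ∑_{d ∈ Z} e^{2πi d l₀/N} δ[n − k₀ − dM] (as an MN-periodic sequence) and any MN-periodic sequence x, the cross-ambiguity factorizes as A_{x,y}[k,l] = (1/√N) · (phase) · ∑_{l̄ ∈ Z_N} x[(k+k₀) mod M + l̄ M] e^{−2πi (l + l₀) l̄ / N}, where the phase has modulus 1. In particular, for fixed k, the values {A_{x,y}[k,l] : l ∈ Z_N} are (up to unimodular phases) the values of an N-point discrete Fourier transform of the subsampled sequence l̄ ↦ x[(k+k₀) mod M + l̄ M]. -/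
/-- Cross-ambiguity function of `MN`-periodic sequences. -/
noncomputable def amb (L : ℕ) (x y : Fin L → ℂ) (k l : Fin L) : ℂ :=
  ∑ n : Fin L, x n * (starRingEnd ℂ) (y (n - k)) *
    Complex.exp (-(2 * Real.pi * Complex.I * (l.val : ℂ) * ((n - k).val : ℂ) / (L : ℂ)))

/-- Zak-OTFS pulsone localized at `(k₀, l₀)`. -/
noncomputable def pulsone (M N : ℕ) (k₀ l₀ : ℕ) (n : Fin (M * N)) : ℂ :=
  if n.val % M = k₀ then
    (1 / Real.sqrt N) *
      Complex.exp (2 * Real.pi * Complex.I * (l₀ : ℂ) * ((n.val / M : ℕ) : ℂ) / (N : ℂ))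
  else 0

theorem subsample_index_lt (M N : ℕ) (hM : 0 < M) (hN : 0 < N) (a : ℕ) (p : Fin N) :
    a % M + p.val * M < M * N := by
  have h1 : a % M < M := Nat.mod_lt _ hM
  have h2 : p.val + 1 ≤ N := p.isLt
  have h3 : (p.val + 1) * M ≤ N * M := Nat.mul_le_mul_right M h2
  have h4 : (p.val + 1) * M = p.val * M + M := Nat.succ_mul _ _
  have h5 : M * N = N * M := Nat.mul_comm M N
  omega

/-- Phase bookkeeping for the pulsone cross-ambiguity. -/
lemma phase_aux (M N l₀ lv k₀ bv s : ℕ) (hM : 0<M) (hN : 0<N) :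
    (starRingEnd ℂ) (Complex.exp (2*Real.pi*Complex.I*(l₀:ℂ)*(bv:ℂ)/(N:ℂ))) *
      Complex.exp (-(2*Real.pi*Complex.I*(lv:ℂ)*((k₀+M*bv : ℕ):ℂ)/((M*N:ℕ):ℂ)))
    = Complex.exp (((2*Real.pi*(((lv:ℝ)+l₀)*((s:ℝ))/N - (lv:ℝ)*k₀/(M*N)) : ℝ) : ℂ)*Complex.I) *
      Complex.exp (-(2*Real.pi*Complex.I*((lv:ℂ)+(l₀:ℂ))*(((s+bv)%N : ℕ):ℂ)/(N:ℂ))) := by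
  have hN' : (N:ℂ) ≠ 0 := Nat.cast_ne_zero.2 hN.ne'
  have hM' : (M:ℂ) ≠ 0 := Nat.cast_ne_zero.2 hM.ne'
  obtain ⟨c, q, hcq, hclt⟩ : ∃ c q : ℕ, s + bv = c + N * q ∧ c < N :=
    ⟨(s+bv)%N, (s+bv)/N, (Nat.mod_add_div _ _).symm, Nat.mod_lt _ hN⟩
  rw [show (s+bv)%N = c from by rw [hcq, Nat.add_mul_mod_self_left, Nat.mod_eq_of_lt hclt]]
  have hc : (c:ℂ) + (N:ℂ)*(q:ℂ) = (s:ℂ)+(bv:ℂ) := by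
    exact_mod_cast congrArg (Nat.cast : ℕ → ℂ) hcq.symm
  rw [← Complex.exp_conj]
  simp only [map_mul, map_div₀, Complex.conj_I, map_natCast, map_ofNat, Complex.conj_ofReal]
  rw [← Complex.exp_add, ← Complex.exp_add]
  rw [show (2:ℂ)*(Real.pi:ℂ)*(-Complex.I)*(l₀:ℂ)*(bv:ℂ)/(N:ℂ) +
      -(2*(Real.pi:ℂ)*Complex.I*(lv:ℂ)*((k₀+M*bv : ℕ):ℂ)/((M*N:ℕ):ℂ))
    = (((2*Real.pi*(((lv:ℝ)+l₀)*((s:ℝ))/N - (lv:ℝ)*k₀/(M*N)) : ℝ) : ℂ)*Complex.I +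
      -(2*(Real.pi:ℂ)*Complex.I*((lv:ℂ)+(l₀:ℂ))*(c:ℂ)/(N:ℂ))) +
      ((-(((lv+l₀)*q : ℕ) : ℤ) : ℤ) : ℂ) * (2*(Real.pi:ℂ)*Complex.I) from ?_]
  · rw [Complex.exp_add, Complex.exp_int_mul_two_pi_mul_I, mul_one]
  · push_cast
    field_simp
    rw [show (c:ℂ) = (s:ℂ) + (bv:ℂ) - (N:ℂ)*(q:ℂ) from by linear_combination hc]
    ring

lemma index_aux (M N : ℕ) (hM : 0 < M) (hN : 0 < N) (k₀ : ℕ)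
    (k : Fin (M*N)) (b : Fin N) :
    (k₀ + M * b.val + k.val) % (M*N) =
      (k.val + k₀) % M + (((k.val + k₀)/M + b.val) % N) * M := by
  set s : ℕ := (k.val + k₀) / M with hs
  have h2 : k.val + k₀ = (k.val + k₀) % M + M * s := (Nat.mod_add_div _ _).symm
  have h3 : s + b.val = (s + b.val) % N + N * ((s + b.val)/N) := (Nat.mod_add_div _ _).symm
  have hmlt : (s + b.val) % N < N := Nat.mod_lt _ hN
  have h4 : (k.val + k₀) % M + ((s + b.val) % N) * M < M * N := by
    have h1 : (k.val + k₀) % M < M := Nat.mod_lt _ hM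
    nlinarith
  have e : M * s + M * b.val = ((s+b.val)%N)*M + (M*N)*((s+b.val)/N) := by
    calc M*s + M*b.val = M*(s+b.val) := by ring
    _ = M*((s+b.val)%N + N*((s+b.val)/N)) := by rw [← h3]
    _ = _ := by ring
  have e2 : k₀ + M * b.val + k.val =
      (k.val + k₀) % M + ((s+b.val)%N)*M + (M*N)*((s+b.val)/N) := by omega
  rw [e2, Nat.add_mul_mod_self_left, Nat.mod_eq_of_lt h4]

/-- Cross-ambiguity with a pulsone factorizes, up to a unimodular phase, as a
normalized `N`-point DFT of the subsampled sequence `l̄ ↦ x[(k+k₀) mod M + l̄M]`: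
`A_{x,y}[k,l] = (1/√N)·(phase)·∑_{l̄ ∈ Z_N} x[(k+k₀) mod M + l̄M] e^{−2πi(l+l₀)l̄/N}`. -/
theorem pulsone_cross_ambiguity_factorization (M N : ℕ) (hM : 0 < M) (hN : 0 < N)
    (k₀ l₀ : ℕ) (hk₀ : k₀ < M) (hl₀ : l₀ < N)
    (x : Fin (M * N) → ℂ) (k l : Fin (M * N)) :
    ∃ ph : ℂ, ‖ph‖ = 1 ∧
      amb (M * N) x (pulsone M N k₀ l₀) k l =
        (1 / Real.sqrt N) * ph *
          ∑ lb : Fin N,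
            x ⟨(k.val + k₀) % M + lb.val * M, subsample_index_lt M N hM hN _ lb⟩ *
              Complex.exp (-(2 * Real.pi * Complex.I *
                ((l.val : ℂ) + (l₀ : ℂ)) * (lb.val : ℂ) / (N : ℂ))) := by
  haveI : NeZero (M * N) := ⟨(Nat.mul_pos hM hN).ne'⟩
  haveI : NeZero N := ⟨hN.ne'⟩
  set s : ℕ := (k.val + k₀) / M with hs
  set θ : ℝ := 2 * Real.pi * (((l.val : ℝ) + l₀) * (s:ℝ) / N - (l.val : ℝ) * k₀ / (M*N)) with hθ
  refine ⟨Complex.exp ((θ:ℂ) * Complex.I), Complex.norm_exp_ofReal_mul_I θ, ?_⟩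
  -- notation
  set e : Fin N × Fin M ≃ Fin (M*N) := finProdFinEquiv.trans (finCongr (Nat.mul_comm N M)) with he
  have heval : ∀ (b : Fin N) (a : Fin M), (e (b, a)).val = a.val + M * b.val := fun b a => rfl
  -- step 1: change of variable n = m + k
  have e1 : amb (M*N) x (pulsone M N k₀ l₀) k l
      = ∑ m : Fin (M*N), x (m + k) * (starRingEnd ℂ) (pulsone M N k₀ l₀ m) *
          Complex.exp (-(2 * Real.pi * Complex.I * (l.val : ℂ) * (m.val : ℂ) / ((M*N : ℕ) : ℂ))) := by
    rw [amb]
    exact (Fintype.sum_equiv (Equiv.addRight k)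
      (fun m => x (m + k) * (starRingEnd ℂ) (pulsone M N k₀ l₀ m) *
          Complex.exp (-(2 * Real.pi * Complex.I * (l.val : ℂ) * (m.val : ℂ) / ((M*N:ℕ) : ℂ))))
      _ (fun m => by simp [Equiv.coe_addRight, add_sub_cancel_right])).symm
  -- step 2: reindex over Fin N × Fin M and collapse first coordinate
  have e2 : amb (M*N) x (pulsone M N k₀ l₀) k l
      = ∑ b : Fin N, (x (e (b, ⟨k₀, hk₀⟩) + k) *
          (starRingEnd ℂ) (pulsone M N k₀ l₀ (e (b, ⟨k₀, hk₀⟩))) *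
          Complex.exp (-(2 * Real.pi * Complex.I * (l.val : ℂ) *
            (((e (b, ⟨k₀, hk₀⟩)).val : ℕ) : ℂ) / ((M*N : ℕ) : ℂ)))) := by
    rw [e1, ← Fintype.sum_equiv e
      (fun p => x (e p + k) * (starRingEnd ℂ) (pulsone M N k₀ l₀ (e p)) *
          Complex.exp (-(2 * Real.pi * Complex.I * (l.val : ℂ) *
            (((e p).val : ℕ) : ℂ) / ((M*N:ℕ) : ℂ))))
      _ (fun p => rfl)]
    rw [Fintype.sum_prod_type]
    refine Finset.sum_congr rfl (fun b _ => ?_)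
    refine Fintype.sum_eq_single _ (fun a ha => ?_)
    have hz : pulsone M N k₀ l₀ (e (b, a)) = 0 := by
      rw [pulsone, if_neg]
      rw [heval, Nat.add_mul_mod_self_left, Nat.mod_eq_of_lt a.isLt]
      exact fun h => ha (Fin.ext h)
    rw [hz, map_zero, mul_zero, zero_mul]
  rw [e2]
  -- step 3: evaluate pulsone at the surviving index and identify terms
  have hσlt : s % N < N := Nat.mod_lt _ hN
  have hc : ∀ b : Fin N, ((b + (⟨s % N, hσlt⟩ : Fin N)).val : ℕ) = (s + b.val) % N := by
    intro b
    rw [Fin.add_def]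
    simp only
    rw [Nat.add_mod, Nat.mod_mod_of_dvd, ← Nat.add_mod, Nat.add_comm]
    exact dvd_refl N
  have key : ∀ b : Fin N,
      x (e (b, ⟨k₀, hk₀⟩) + k) *
          (starRingEnd ℂ) (pulsone M N k₀ l₀ (e (b, ⟨k₀, hk₀⟩))) *
          Complex.exp (-(2 * Real.pi * Complex.I * (l.val : ℂ) *
            (((e (b, ⟨k₀, hk₀⟩)).val : ℕ) : ℂ) / ((M*N : ℕ) : ℂ)))
      = (1 / Real.sqrt N) * Complex.exp ((θ:ℂ) * Complex.I) *
          (x ⟨(k.val + k₀) % M + (b + (⟨s % N, hσlt⟩ : Fin N)).val * M,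
              subsample_index_lt M N hM hN _ _⟩ *
            Complex.exp (-(2 * Real.pi * Complex.I *
              ((l.val : ℂ) + (l₀ : ℂ)) * (((b + (⟨s % N, hσlt⟩ : Fin N)).val : ℕ) : ℂ) / (N : ℂ)))) := by
    intro b
    have hval : (e (b, ⟨k₀, hk₀⟩)).val = k₀ + M * b.val := heval b _
    have hmod : (e (b, ⟨k₀, hk₀⟩)).val % M = k₀ := by
      rw [hval, Nat.add_mul_mod_self_left, Nat.mod_eq_of_lt hk₀]
    have hdiv : (e (b, ⟨k₀, hk₀⟩)).val / M = b.val := by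
      rw [hval, Nat.add_mul_div_left _ _ hM, Nat.div_eq_of_lt hk₀, Nat.zero_add]
    have hidx : e (b, ⟨k₀, hk₀⟩) + k
        = ⟨(k.val + k₀) % M + (b + (⟨s % N, hσlt⟩ : Fin N)).val * M,
            subsample_index_lt M N hM hN _ _⟩ := by
      apply Fin.ext
      rw [Fin.add_def]
      simp only
      rw [hval, hc b, hs]
      exact index_aux M N hM hN k₀ k b
    rw [pulsone, if_pos hmod, hdiv, hidx, map_mul]
    have haux := phase_aux M N l₀ l.val k₀ b.val s hM hN
    rw [← hval, ← hc b, ← hθ] at haux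
    have hconj : (starRingEnd ℂ) ((1 : ℂ) / (Real.sqrt N : ℂ)) = (1 : ℂ) / (Real.sqrt N : ℂ) := by
      rw [map_div₀, map_one, Complex.conj_ofReal]
    rw [hconj]
    linear_combination (x ⟨(k.val + k₀) % M + (b + (⟨s % N, hσlt⟩ : Fin N)).val * M,
        subsample_index_lt M N hM hN _ _⟩ *
      ((1 : ℂ) / (Real.sqrt N : ℂ))) * haux
  rw [Finset.sum_congr rfl (fun b _ => key b), ← Finset.mul_sum]
  congr 1
  exact Fintype.sum_equiv (Equiv.addRight (⟨s % N, hσlt⟩ : Fin N))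
    (fun b => x ⟨(k.val + k₀) % M + (b + (⟨s % N, hσlt⟩ : Fin N)).val * M,
        subsample_index_lt M N hM hN _ _⟩ *
      Complex.exp (-(2 * Real.pi * Complex.I *
        ((l.val : ℂ) + (l₀ : ℂ)) * (((b + (⟨s % N, hσlt⟩ : Fin N)).val : ℕ) : ℂ) / (N : ℂ))))
    (fun lb => x ⟨(k.val + k₀) % M + lb.val * M, subsample_index_lt M N hM hN _ lb⟩ *
      Complex.exp (-(2 * Real.pi * Complex.I *
        ((l.val : ℂ) + (l₀ : ℂ)) * (lb.val : ℂ) / (N : ℂ))))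
    (fun b => rfl)
end

section
/- Suppose x is a unit-norm MN-periodic sequence whose self-ambiguity satisfies A_x[0,0] = 1 and A_x[k',l'] = 0 for all (k',l') ∈ K_S \ {(0,0)}, where S ⊆ Z_{MN} × Z_{MN} is the support of a function h and K_S = {(k',l') : S ∩ (S + (k',l')) ≠ ∅}. Define the noiseless received sequence y[n] = ∑_{(k,l) ∈ S} h[k,l] x[(n−k) mod MN] e^{2πi l(n−k)/(MN)}. Then the cross-ambiguity estimate recovers the channel exactly on its support: A_{y,x}[k,l] = h[k,l] · (unimodular phase independent of h) for every (k,l) ∈ S. In the simplest normalization, A_{y,x}[k,l] = h[k,l] for all (k,l) ∈ S. -/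
noncomputable def eL (L : ℕ) (j : ℤ) : ℂ := Complex.exp (2 * Real.pi * Complex.I * j / L)


lemma eL_add (L : ℕ) (a b : ℤ) : eL L (a + b) = eL L a * eL L b := by
  rw [eL, eL, eL, ← Complex.exp_add]
  congr 1
  push_cast
  ring

lemma eL_congr (L : ℕ) [NeZero L] {a b : ℤ} (hc : (a : ZMod L) = b) : eL L a = eL L b := by
  have hdvd : (L : ℤ) ∣ a - b := by
    rw [← ZMod.intCast_zmod_eq_zero_iff_dvd]
    push_cast
    rw [hc, sub_self]
  obtain ⟨t, ht⟩ := hdvd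
  have ha : a = b + L * t := by linarith
  have hL0 : (L : ℂ) ≠ 0 := Nat.cast_ne_zero.mpr (NeZero.ne L)
  rw [ha, eL, eL,
    show (2 * (Real.pi : ℂ) * Complex.I * ((b + (L : ℤ) * t : ℤ) : ℂ) / L)
      = 2 * (Real.pi : ℂ) * Complex.I * (b : ℂ) / L + (t : ℂ) * (2 * Real.pi * Complex.I) by
      push_cast; field_simp,
    Complex.exp_add, Complex.exp_int_mul_two_pi_mul_I, mul_one]

lemma exp_to_eL_neg (L : ℕ) (a v : ℕ) :
    Complex.exp (-(2 * Real.pi * Complex.I * (a : ℂ) * (v : ℂ) / (L : ℂ))) = eL L (-(a * v)) := by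
  rw [eL]; congr 1; push_cast; ring

lemma exp_to_eL_pos (L : ℕ) (a v : ℕ) :
    Complex.exp (2 * Real.pi * Complex.I * (a : ℂ) * (v : ℂ) / (L : ℂ)) = eL L (a * v) := by
  rw [eL]; congr 1; push_cast; ring

lemma fin_val_add_zmod {L : ℕ} (a b : Fin L) :
    (((a + b : Fin L).val : ℕ) : ZMod L) = (a.val : ZMod L) + (b.val : ZMod L) := by
  rw [Fin.val_add, ZMod.natCast_mod, Nat.cast_add]

lemma fin_val_sub_zmod {L : ℕ} [NeZero L] (a b : Fin L) :
    (((a - b : Fin L).val : ℕ) : ZMod L) = (a.val : ZMod L) - (b.val : ZMod L) := by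
  have h := fin_val_add_zmod (a - b) b
  rw [sub_add_cancel a b] at h
  rw [eq_sub_iff_add_eq, ← h]

lemma predict_inner_sum (L : ℕ) [NeZero L] (x : Fin L → ℂ) (c : ℂ) (k k' l l' : Fin L) :
    ∑ n : Fin L, c * x (n - k') *
        Complex.exp (2 * Real.pi * Complex.I * (l'.val : ℂ) * ((n - k').val : ℂ) / (L : ℂ)) *
        (starRingEnd ℂ) (x (n - k)) *
        Complex.exp (-(2 * Real.pi * Complex.I * (l.val : ℂ) * ((n - k).val : ℂ) / (L : ℂ)))
    = c * eL L (l'.val * (k - k').val) * amb L x x (k - k') (l - l') := by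
  have reamb : amb L x x (k - k') (l - l') =
      ∑ m : Fin L, x (m + (k - k')) * (starRingEnd ℂ) (x m) *
        Complex.exp (-(2 * Real.pi * Complex.I * ((l - l').val : ℂ) * (m.val : ℂ) / (L : ℂ))) := by
    rw [amb, ← Equiv.sum_comp (Equiv.addRight (k - k'))]
    refine Finset.sum_congr rfl fun m _ => ?_
    simp only [Equiv.coe_addRight, add_sub_cancel_right]
  rw [reamb, Finset.mul_sum, ← Equiv.sum_comp (Equiv.addRight k)]
  refine Finset.sum_congr rfl fun m _ => ?_
  simp only [Equiv.coe_addRight, add_sub_cancel_right, add_sub_assoc]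
  rw [exp_to_eL_pos, exp_to_eL_neg, exp_to_eL_neg]
  have key : eL L (↑l'.val * ↑(m + (k - k')).val) * eL L (-(↑l.val * ↑m.val))
      = eL L (↑l'.val * ↑(k - k').val) * eL L (-(↑(l - l').val * ↑m.val)) := by
    rw [← eL_add, ← eL_add]
    apply eL_congr
    push_cast
    simp only [fin_val_add_zmod, fin_val_sub_zmod]
    ring
  calc c * x (m + (k - k')) * eL L (↑l'.val * ↑(m + (k - k')).val) * (starRingEnd ℂ) (x m) *
        eL L (-(↑l.val * ↑m.val))
      = c * x (m + (k - k')) * (starRingEnd ℂ) (x m) *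
          (eL L (↑l'.val * ↑(m + (k - k')).val) * eL L (-(↑l.val * ↑m.val))) := by ring
    _ = c * x (m + (k - k')) * (starRingEnd ℂ) (x m) *
          (eL L (↑l'.val * ↑(k - k').val) * eL L (-(↑(l - l').val * ↑m.val))) := by rw [key]
    _ = c * eL L (↑l'.val * ↑(k - k').val) *
          (x (m + (k - k')) * (starRingEnd ℂ) (x m) * eL L (-(↑(l - l').val * ↑m.val))) := by ring


/-- Predictability lemma: if the self-ambiguity of a unit-norm `x` equals `1` at
the origin and vanishes on the punctured difference set `K_S \\ {(0,0)}` of the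
support `S` of the channel `h`, then the cross-ambiguity of the noiseless
received sequence `y` with `x` recovers `h` exactly on `S`: `A_{y,x}[k,l] = h[k,l]`. -/
theorem predictability (M N : ℕ) (hM : 0 < M) (hN : 0 < N)
    (h : Fin (M * N) → Fin (M * N) → ℂ)
    (x : Fin (M * N) → ℂ)
    (hx : ∑ n : Fin (M * N), ‖x n‖ ^ 2 = 1)
    (hA0 : amb (M * N) x x ⟨0, Nat.mul_pos hM hN⟩ ⟨0, Nat.mul_pos hM hN⟩ = 1)
    (hAvanish : ∀ k' l' : Fin (M * N),
      (∃ a b : Fin (M * N), h a b ≠ 0 ∧ h (a + k') (b + l') ≠ 0) →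
      ¬(k' = ⟨0, Nat.mul_pos hM hN⟩ ∧ l' = ⟨0, Nat.mul_pos hM hN⟩) →
      amb (M * N) x x k' l' = 0)
    (y : Fin (M * N) → ℂ)
    (hy : y = fun n => ∑ k : Fin (M * N), ∑ l : Fin (M * N),
      h k l * x (n - k) *
        Complex.exp (2 * Real.pi * Complex.I * (l.val : ℂ) * ((n - k).val : ℂ) / ((M * N : ℕ) : ℂ))) :
    ∀ k l : Fin (M * N), h k l ≠ 0 → amb (M * N) y x k l = h k l := by
  intro k l hkl
  have hL : 0 < M * N := Nat.mul_pos hM hN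
  haveI : NeZero (M * N) := ⟨hL.ne'⟩
  have hzero : (⟨0, Nat.mul_pos hM hN⟩ : Fin (M * N)) = 0 := by
    ext; simp
  subst hy
  have expand : amb (M * N) (fun n => ∑ k' : Fin (M * N), ∑ l' : Fin (M * N),
      h k' l' * x (n - k') *
        Complex.exp (2 * Real.pi * Complex.I * (l'.val : ℂ) * ((n - k').val : ℂ) / ((M * N : ℕ) : ℂ))) x k l
      = ∑ k' : Fin (M * N), ∑ l' : Fin (M * N), ∑ n : Fin (M * N),
          h k' l' * x (n - k') *
            Complex.exp (2 * Real.pi * Complex.I * (l'.val : ℂ) * ((n - k').val : ℂ) / ((M * N : ℕ) : ℂ)) *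
          (starRingEnd ℂ) (x (n - k)) *
          Complex.exp (-(2 * Real.pi * Complex.I * (l.val : ℂ) * ((n - k).val : ℂ) / ((M * N : ℕ) : ℂ))) := by
    rw [amb]
    simp only [Finset.sum_mul]
    rw [Finset.sum_comm]
    exact Finset.sum_congr rfl fun k' _ => Finset.sum_comm
  rw [expand]
  have step2 : ∀ k' l' : Fin (M * N), ∑ n : Fin (M * N),
      h k' l' * x (n - k') *
        Complex.exp (2 * Real.pi * Complex.I * (l'.val : ℂ) * ((n - k').val : ℂ) / ((M * N : ℕ) : ℂ)) *
      (starRingEnd ℂ) (x (n - k)) *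
      Complex.exp (-(2 * Real.pi * Complex.I * (l.val : ℂ) * ((n - k).val : ℂ) / ((M * N : ℕ) : ℂ)))
      = h k' l' * eL (M * N) (l'.val * (k - k').val) * amb (M * N) x x (k - k') (l - l') :=
    fun k' l' => predict_inner_sum (M * N) x (h k' l') k k' l l'
  simp only [step2]
  have hvan : ∀ k' l' : Fin (M * N), (k' ≠ k ∨ l' ≠ l) →
      h k' l' * eL (M * N) (l'.val * (k - k').val) * amb (M * N) x x (k - k') (l - l') = 0 := by
    intro k' l' hne
    by_cases hh : h k' l' = 0
    · rw [hh, zero_mul, zero_mul]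
    · have hv : amb (M * N) x x (k - k') (l - l') = 0 := by
        refine hAvanish (k - k') (l - l')
          ⟨k', l', hh, by rwa [add_sub_cancel k' k, add_sub_cancel l' l]⟩ ?_
        rintro ⟨h1, h2⟩
        rw [hzero] at h1 h2
        have hk : k = k' := by
          have := sub_eq_zero.mp h1; exact this
        have hl : l = l' := sub_eq_zero.mp h2
        rcases hne with hne | hne
        · exact hne hk.symm
        · exact hne hl.symm
      rw [hv, mul_zero]
  rw [Fintype.sum_eq_single k
      (fun k' hk' => Finset.sum_eq_zero fun l' _ => hvan k' l' (Or.inl hk')),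
    Fintype.sum_eq_single l (fun l' hl' => hvan k l' (Or.inr hl'))]
  rw [sub_self, sub_self, ← hzero, hA0, mul_one]
  rw [hzero]
  simp [eL]
end
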